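/- Let G be a topological group, H a closed subgroup, and K a strongly neutral subgroup of G. If the quotient space K\G is first-countable, then the double coset space K\G/H is metrizable. -/

import Mathlib

open scoped Pointwise

/-- The quotient topology on the double coset space. -/
instance dosetQuotientTopology {G : Type*} [Group G] [TopologicalSpace G] (K H : Set G) :
    TopologicalSpace (DoubleCoset.Quotient K H) :=
  inferInstanceAs (TopologicalSpace (Quotient (DoubleCoset.setoid K H)))

namespace Stmt8Aux

open Filter Set Topology Uniformity

variable {G : Type*} [Group G] [TopologicalSpace G] [IsTopologicalGroup G]

/-- Pointwise form of strong neutrality. -/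
theorem hKp {K : Subgroup G}
    (hK : ∀ O : Set G, IsOpen O → (K : Set G) ⊆ O →
      ∃ V : Set G, IsOpen V ∧ (1 : G) ∈ V ∧ (K : Set G) * V ⊆ O)
    {O : Set G} (hO : IsOpen O) (hKO : (K : Set G) ⊆ O) :
    ∃ V : Set G, IsOpen V ∧ (1 : G) ∈ V ∧ ∀ k ∈ (K : Set G), ∀ v ∈ V, k * v ∈ O := by
  obtain ⟨V, hVo, hV1, hV⟩ := hK O hO hKO
  exact ⟨V, hVo, hV1, fun k hk v hv => hV (Set.mul_mem_mul hk hv)⟩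

/-- The "swap" lemma: elements of a small neighborhood can be moved past `K`. -/
theorem swapKV {K : Subgroup G}
    (hK : ∀ O : Set G, IsOpen O → (K : Set G) ⊆ O →
      ∃ V : Set G, IsOpen V ∧ (1 : G) ∈ V ∧ (K : Set G) * V ⊆ O)
    {V : Set G} (hVo : IsOpen V) (hV1 : (1 : G) ∈ V) :
    ∃ W : Set G, IsOpen W ∧ (1 : G) ∈ W ∧
      ∀ w ∈ W, ∀ k ∈ (K : Set G), ∃ k' ∈ (K : Set G), ∃ v ∈ V, w * k = k' * v := by
  have hO : IsOpen (V⁻¹ * (K : Set G)) := hVo.inv.mul_right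
  have hKO : (K : Set G) ⊆ V⁻¹ * (K : Set G) := by
    intro k hk
    exact ⟨1, by simpa using hV1, k, hk, one_mul k⟩
  obtain ⟨V', hV'o, hV'1, hV'⟩ := hKp hK hO hKO
  refine ⟨V'⁻¹, hV'o.inv, by simpa using hV'1, ?_⟩
  intro w hw k hk
  have h1 : k⁻¹ * w⁻¹ ∈ V⁻¹ * (K : Set G) := by
    refine hV' k⁻¹ (K.inv_mem hk) w⁻¹ ?_
    simpa using hw
  obtain ⟨vi, hvi, k₀, hk₀, heq⟩ := h1
  refine ⟨k₀⁻¹, K.inv_mem hk₀, vi⁻¹, by simpa using hvi, ?_⟩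
  have heq' : vi * k₀ = k⁻¹ * w⁻¹ := heq
  have h2 := congrArg Inv.inv heq'
  simp only [mul_inv_rev, inv_inv] at h2
  exact h2.symm

/-- `K * C` is closed whenever `C` is closed. -/
theorem isClosed_K_mul {K : Subgroup G}
    (hK : ∀ O : Set G, IsOpen O → (K : Set G) ⊆ O →
      ∃ V : Set G, IsOpen V ∧ (1 : G) ∈ V ∧ (K : Set G) * V ⊆ O)
    {C : Set G} (hC : IsClosed C) :
    IsClosed {g : G | ∃ k ∈ (K : Set G), ∃ c ∈ C, g = k * c} := by
  rw [← isOpen_compl_iff]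
  rw [isOpen_iff_forall_mem_open]
  intro g hg
  have hg' : ¬ ∃ k ∈ (K : Set G), ∃ c ∈ C, g = k * c := hg
  have hKsub : (K : Set G) ⊆ Cᶜ * {g⁻¹} := by
    intro k hk
    have hkg : k * g ∈ Cᶜ := by
      intro hmem
      exact hg' ⟨k⁻¹, K.inv_mem hk, k * g, hmem, by group⟩
    exact ⟨k * g, hkg, g⁻¹, rfl, by group⟩
  obtain ⟨V, hVo, hV1, hV⟩ := hKp hK (hC.isOpen_compl.mul_right) hKsub
  refine ⟨V * {g}, ?_, hVo.mul_right, ⟨1, hV1, g, rfl, one_mul g⟩⟩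
  rintro y ⟨v, hv, g0, hg0, hy⟩
  have hg0' : g0 = g := hg0
  have hy' : v * g = y := by rw [← hg0']; exact hy
  intro hmem
  have hmem' : ∃ k ∈ (K : Set G), ∃ c ∈ C, y = k * c := hmem
  obtain ⟨k, hk, c, hc, hyc⟩ := hmem'
  have h2 : k⁻¹ * v ∈ Cᶜ * {g⁻¹} := hV k⁻¹ (K.inv_mem hk) v hv
  obtain ⟨c', hc', gi, hgi, heq⟩ := h2
  have hgi' : gi = g⁻¹ := hgi
  subst hgi'
  have heq' : c' * g⁻¹ = k⁻¹ * v := heq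
  apply hc'
  have : c = c' := by
    have h3 : k⁻¹ * (v * g) = c := by rw [hy', hyc]; group
    rw [← h3, ← mul_assoc, ← heq']
    group
  rwa [this] at hc

section KH

variable (K H : Subgroup G)

/-- The base relation on `G`: `y ∈ K v x H` with `v ∈ V`. -/
def R (V : Set G) : Set (G × G) :=
  {p | ∃ k ∈ (K : Set G), ∃ v ∈ V, ∃ h ∈ (H : Set G), p.2 = k * v * p.1 * h}

/-- The double coset quotient. -/
abbrev Q := Quotient (DoubleCoset.setoid (K : Set G) (H : Set G))

/-- The quotient map. -/
def q : G → Q K H := Quotient.mk''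

/-- Entourage on the quotient. -/
def E (V : Set G) : Set (Q K H × Q K H) :=
  (fun p : G × G => (q K H p.1, q K H p.2)) '' R K H V

variable {K H}

theorem q_surj : Function.Surjective (q K H) := Quotient.mk''_surjective

theorem q_eq {x y : G} :
    q K H x = q K H y ↔ ∃ k ∈ (K : Set G), ∃ h ∈ (H : Set G), y = k * x * h := by
  rw [q, Quotient.eq'']
  exact DoubleCoset.rel_iff

theorem mem_E {V : Set G} {a b : Q K H} :
    (a, b) ∈ E K H V ↔ ∃ x y : G, q K H x = a ∧ q K H y = b ∧
      ∃ k ∈ (K : Set G), ∃ v ∈ V, ∃ h ∈ (H : Set G), y = k * v * x * h := by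
  constructor
  · rintro ⟨⟨x, y⟩, ⟨k, hk, v, hv, h, hh, he⟩, heq⟩
    exact ⟨x, y, congrArg Prod.fst heq, congrArg Prod.snd heq, k, hk, v, hv, h, hh, he⟩
  · rintro ⟨x, y, h1, h2, k, hk, v, hv, h, hh, he⟩
    exact ⟨(x, y), ⟨k, hk, v, hv, h, hh, he⟩, by simp [h1, h2]⟩

theorem E_self {V : Set G} (hV1 : (1 : G) ∈ V) (a : Q K H) : (a, a) ∈ E K H V := by
  obtain ⟨x, rfl⟩ := q_surj (K := K) (H := H) a
  exact mem_E.mpr ⟨x, x, rfl, rfl, 1, K.one_mem, 1, hV1, 1, H.one_mem, by group⟩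

theorem E_mono {V V' : Set G}
    (hVV : ∀ k ∈ (K : Set G), ∀ v ∈ V, ∃ k' ∈ (K : Set G), ∃ v' ∈ V', k * v = k' * v') :
    E K H V ⊆ E K H V' := by
  rintro ⟨a, b⟩ hab
  obtain ⟨x, y, hx, hy, k, hk, v, hv, h, hh, he⟩ := mem_E.mp hab
  obtain ⟨k', hk', v', hv', heq'⟩ := hVV k hk v hv
  refine mem_E.mpr ⟨x, y, hx, hy, k', hk', v', hv', h, hh, ?_⟩
  rw [he, heq']

theorem E_mono' {V V' : Set G} (h : V ⊆ V') : E K H V ⊆ E K H V' :=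
  E_mono fun k hk v hv => ⟨k, hk, v, h hv, rfl⟩

theorem E_symm
    (hK : ∀ O : Set G, IsOpen O → (K : Set G) ⊆ O →
      ∃ V : Set G, IsOpen V ∧ (1 : G) ∈ V ∧ (K : Set G) * V ⊆ O)
    {V : Set G} (hVo : IsOpen V) (hV1 : (1 : G) ∈ V) :
    ∃ W : Set G, IsOpen W ∧ (1 : G) ∈ W ∧
      E K H W ⊆ Prod.swap ⁻¹' E K H V := by
  obtain ⟨W₁, hW₁o, hW₁1, hW₁⟩ := swapKV hK hVo hV1
  refine ⟨W₁⁻¹, hW₁o.inv, by simpa using hW₁1, ?_⟩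
  rintro ⟨a, b⟩ hab
  obtain ⟨x, y, hx, hy, k, hk, w, hw, h, hh, heq⟩ := mem_E.mp hab
  obtain ⟨k', hk', v, hv, heq'⟩ := hW₁ w⁻¹ (by simpa using hw) k⁻¹ (K.inv_mem hk)
  refine Set.mem_preimage.mpr (mem_E.mpr ⟨y, x, hy, hx, k', hk', v, hv, h⁻¹, H.inv_mem hh, ?_⟩)
  have hx' : x = w⁻¹ * k⁻¹ * y * h⁻¹ := by rw [heq]; group
  rw [hx', heq']

theorem E_comp
    (hK : ∀ O : Set G, IsOpen O → (K : Set G) ⊆ O →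
      ∃ V : Set G, IsOpen V ∧ (1 : G) ∈ V ∧ (K : Set G) * V ⊆ O)
    {V : Set G} (hVo : IsOpen V) (hV1 : (1 : G) ∈ V) :
    ∃ W : Set G, IsOpen W ∧ (1 : G) ∈ W ∧
      ∀ a b c : Q K H, (a, b) ∈ E K H W → (b, c) ∈ E K H W → (a, c) ∈ E K H V := by
  obtain ⟨V₂, hV₂o, hV₂1, hV₂⟩ := exists_open_nhds_one_mul_subset (hVo.mem_nhds hV1)
  obtain ⟨W₁, hW₁o, hW₁1, hW₁⟩ := swapKV hK hV₂o hV₂1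
  refine ⟨W₁ ∩ V₂, hW₁o.inter hV₂o, ⟨hW₁1, hV₂1⟩, ?_⟩
  intro a b c hab hbc
  obtain ⟨x, y, hx, hy, k₀, hk₀, w₀, hw₀, h₀, hh₀, heq₀⟩ := mem_E.mp hab
  obtain ⟨y', z, hy', hz, k, hk, w, hw, h, hh, heq⟩ := mem_E.mp hbc
  -- q y' = q y
  have hyy' : ∃ k₁ ∈ (K : Set G), ∃ h₁ ∈ (H : Set G), y' = k₁ * y * h₁ := by
    rw [← q_eq]; rw [hy, hy']
  obtain ⟨k₁, hk₁, h₁, hh₁, heq₁⟩ := hyy'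
  obtain ⟨k', hk', v₂, hv₂, heqs⟩ := hW₁ w hw.1 (k₁ * k₀) (K.mul_mem hk₁ hk₀)
  refine mem_E.mpr ⟨x, z, hx, hz, k * k', K.mul_mem hk hk', v₂ * w₀,
    hV₂ (Set.mul_mem_mul hv₂ hw₀.2), h₀ * h₁ * h, H.mul_mem (H.mul_mem hh₀ hh₁) hh, ?_⟩
  subst heq heq₁ heq₀
  have hs : w * (k₁ * k₀) * (w₀ * (x * (h₀ * (h₁ * h)))) =
      k' * v₂ * (w₀ * (x * (h₀ * (h₁ * h)))) := by rw [heqs]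
  calc k * w * (k₁ * (k₀ * w₀ * x * h₀) * h₁) * h
      = k * (w * (k₁ * k₀) * (w₀ * (x * (h₀ * (h₁ * h))))) := by group
    _ = k * (k' * v₂ * (w₀ * (x * (h₀ * (h₁ * h))))) := by rw [hs]
    _ = k * k' * (v₂ * w₀) * x * (h₀ * h₁ * h) := by group

/-- From first countability of `K\G`: a countable cofinal family of neighborhoods. -/
theorem countable_family {K : Subgroup G}
    (hK : ∀ O : Set G, IsOpen O → (K : Set G) ⊆ O →
      ∃ V : Set G, IsOpen V ∧ (1 : G) ∈ V ∧ (K : Set G) * V ⊆ O)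
    (hfc : FirstCountableTopology (Quotient (QuotientGroup.rightRel K))) :
    ∃ V' : ℕ → Set G, (∀ n, IsOpen (V' n) ∧ (1 : G) ∈ V' n) ∧
      ∀ V : Set G, IsOpen V → (1 : G) ∈ V →
        ∃ n, ∀ k ∈ (K : Set G), ∀ v ∈ V' n,
          ∃ k' ∈ (K : Set G), ∃ v' ∈ V, k * v = k' * v' := by
  haveI := hfc
  set π : G → Quotient (QuotientGroup.rightRel K) := Quotient.mk'' with hπ
  have hπc : Continuous π := continuous_quotient_mk'
  have hπeq : ∀ x y : G, π x = π y ↔ y * x⁻¹ ∈ K := by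
    intro x y
    rw [hπ, Quotient.eq'']
    exact QuotientGroup.rightRel_apply
  obtain ⟨s, hs⟩ := (𝓝 (π 1)).exists_antitone_basis
  -- the preimages
  have hmem : ∀ n, ∀ k ∈ (K : Set G), π ⁻¹' s n ∈ 𝓝 k := by
    intro n k hk
    have : π k = π 1 := by rw [hπeq]; simpa using hk
    have h1 : s n ∈ 𝓝 (π k) := by rw [this]; exact hs.mem n
    exact hπc.continuousAt.preimage_mem_nhds h1
  have hsubint : ∀ n, (K : Set G) ⊆ interior (π ⁻¹' s n) := by
    intro n k hk
    exact mem_interior_iff_mem_nhds.mpr (hmem n k hk)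
  have hchoice : ∀ n, ∃ V : Set G, IsOpen V ∧ (1 : G) ∈ V ∧
      ∀ k ∈ (K : Set G), ∀ v ∈ V, k * v ∈ π ⁻¹' s n := by
    intro n
    obtain ⟨V, hVo, hV1, hV⟩ := hKp hK isOpen_interior (hsubint n)
    exact ⟨V, hVo, hV1, fun k hk v hv => interior_subset (hV k hk v hv)⟩
  choose V' hV'o hV'1 hV' using hchoice
  refine ⟨V', fun n => ⟨hV'o n, hV'1 n⟩, ?_⟩
  intro V hVo hV1
  set U : Set (Quotient (QuotientGroup.rightRel K)) := π '' ((K : Set G) * V) with hU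
  have hpre : π ⁻¹' U = (K : Set G) * V := by
    ext g
    constructor
    · rintro ⟨u, hu, hgu⟩
      obtain ⟨k, hk, v, hv, rfl⟩ := hu
      have hgu' : π (k * v) = π g := hgu
      have : g * (k * v)⁻¹ ∈ K := by rw [← hπeq]; exact hgu'
      refine ⟨g * (k * v)⁻¹ * k, K.mul_mem this hk, v, hv, by group⟩
    · intro hg
      exact ⟨g, hg, rfl⟩
  have hUopen : IsOpen U := by
    have : IsOpen (π ⁻¹' U) := by rw [hpre]; exact hVo.mul_left
    exact isQuotientMap_quotient_mk'.isOpen_preimage.mp this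
  have hUmem : U ∈ 𝓝 (π 1) := by
    refine hUopen.mem_nhds ⟨1, ⟨1, K.one_mem, 1, hV1, by group⟩, rfl⟩
  obtain ⟨n, -, hn⟩ := hs.toHasBasis.mem_iff.mp hUmem
  refine ⟨n, fun k hk v hv => ?_⟩
  have hkv : k * v ∈ (K : Set G) * V := by
    rw [← hpre]
    exact hn (hV' n k hk v hv)
  obtain ⟨k', hk', v', hv', heq⟩ := hkv
  exact ⟨k', hk', v', hv', heq.symm⟩

/-- Neighborhood adapted to a point of a `K`-left-saturated open set. -/
theorem exists_V_of_saturated {K : Subgroup G}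
    (hK : ∀ O : Set G, IsOpen O → (K : Set G) ⊆ O →
      ∃ V : Set G, IsOpen V ∧ (1 : G) ∈ V ∧ (K : Set G) * V ⊆ O)
    {O : Set G} (hO : IsOpen O) (hsat : ∀ k ∈ (K : Set G), ∀ y ∈ O, k * y ∈ O)
    {x : G} (hx : x ∈ O) :
    ∃ V : Set G, IsOpen V ∧ (1 : G) ∈ V ∧ ∀ k ∈ (K : Set G), ∀ v ∈ V, k * v * x ∈ O := by
  have hKsub : (K : Set G) ⊆ O * {x⁻¹} := by
    intro k hk
    exact ⟨k * x, hsat k hk x hx, x⁻¹, rfl, by group⟩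
  obtain ⟨V, hVo, hV1, hV⟩ := hKp hK (hO.mul_right) hKsub
  refine ⟨V, hVo, hV1, fun k hk v hv => ?_⟩
  obtain ⟨y, hy, xi, hxi, heq⟩ := hV k hk v hv
  have hxi' : xi = x⁻¹ := hxi
  have heq' : y * xi = k * v := heq
  have : k * v * x = y := by rw [← heq', hxi']; group
  rwa [this]

section KH2

variable {K H : Subgroup G}

theorem q_cont : Continuous (q K H) := continuous_coinduced_rng

theorem q_isQuotientMap : IsQuotientMap (q K H) := isQuotientMap_quot_mk

/-- The saturation of a set, described explicitly. -/
theorem q_preimage_image {U : Set G} :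
    q K H ⁻¹' (q K H '' U) =
      {y | ∃ u ∈ U, ∃ k ∈ (K : Set G), ∃ h ∈ (H : Set G), y = k * u * h} := by
  ext y
  simp only [Set.mem_preimage, Set.mem_image, Set.mem_setOf_eq]
  constructor
  · rintro ⟨u, hu, hq⟩
    obtain ⟨k, hk, h, hh, he⟩ := q_eq.mp hq
    exact ⟨u, hu, k, hk, h, hh, he⟩
  · rintro ⟨u, hu, k, hk, h, hh, he⟩
    exact ⟨u, hu, q_eq.mpr ⟨k, hk, h, hh, he⟩⟩

theorem isOpen_sat {U : Set G} (hU : IsOpen U) :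
    IsOpen {y | ∃ u ∈ U, ∃ k ∈ (K : Set G), ∃ h ∈ (H : Set G), y = k * u * h} := by
  have heq : {y | ∃ u ∈ U, ∃ k ∈ (K : Set G), ∃ h ∈ (H : Set G), y = k * u * h} =
      ((K : Set G) * U) * (H : Set G) := by
    ext y
    constructor
    · rintro ⟨u, hu, k, hk, h, hh, rfl⟩
      exact ⟨k * u, ⟨k, hk, u, hu, rfl⟩, h, hh, rfl⟩
    · rintro ⟨a, ⟨k, hk, u, hu, hku⟩, h, hh, hah⟩
      have hku' : k * u = a := hku
      have hah' : a * h = y := hah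
      exact ⟨u, hu, k, hk, h, hh, by rw [← hah', ← hku']⟩
  rw [heq]
  exact (hU.mul_left).mul_right

theorem q_isOpenMap : IsOpenMap (q K H) := by
  intro U hU
  rw [← (q_isQuotientMap (K := K) (H := H)).isOpen_preimage, q_preimage_image]
  exact isOpen_sat hU

theorem nhds_q (x : G) : 𝓝 (q K H x) = Filter.map (q K H) (𝓝 x) :=
  le_antisymm (q_isOpenMap.nhds_le x) (q_cont.tendsto x)

variable (K H)

/-- The filter basis of entourages. -/
def basis : FilterBasis (Q K H × Q K H) where
  sets := {S | ∃ V : Set G, IsOpen V ∧ (1 : G) ∈ V ∧ S = E K H V}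
  nonempty := ⟨E K H Set.univ, Set.univ, isOpen_univ, Set.mem_univ 1, rfl⟩
  inter_sets := by
    rintro S₁ S₂ ⟨V₁, hV₁o, hV₁1, rfl⟩ ⟨V₂, hV₂o, hV₂1, rfl⟩
    exact ⟨E K H (V₁ ∩ V₂), ⟨V₁ ∩ V₂, hV₁o.inter hV₂o, ⟨hV₁1, hV₂1⟩, rfl⟩,
      Set.subset_inter (E_mono' Set.inter_subset_left) (E_mono' Set.inter_subset_right)⟩

variable {K H}

theorem mem_basis {S : Set (Q K H × Q K H)} :
    S ∈ basis K H ↔ ∃ V : Set G, IsOpen V ∧ (1 : G) ∈ V ∧ S = E K H V := Iff.rfl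

/-- The uniform space core on the double coset space. -/
def core
    (hK : ∀ O : Set G, IsOpen O → (K : Set G) ⊆ O →
      ∃ V : Set G, IsOpen V ∧ (1 : G) ∈ V ∧ (K : Set G) * V ⊆ O) :
    UniformSpace.Core (Q K H) :=
  UniformSpace.Core.mkOfBasis (basis K H)
    (by rintro r ⟨V, hVo, hV1, rfl⟩ x; exact E_self hV1 x)
    (by
      rintro r ⟨V, hVo, hV1, rfl⟩
      obtain ⟨W, hWo, hW1, hsub⟩ := E_symm hK hVo hV1
      exact ⟨E K H W, ⟨W, hWo, hW1, rfl⟩, hsub⟩)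
    (by
      rintro r ⟨V, hVo, hV1, rfl⟩
      obtain ⟨W, hWo, hW1, hW⟩ := E_comp hK hVo hV1
      refine ⟨E K H W, ⟨W, hWo, hW1, rfl⟩, ?_⟩
      rintro ⟨a, c⟩ ⟨b, h1, h2⟩
      exact hW a b c h1 h2)

theorem nhds_eq_comap
    (hK : ∀ O : Set G, IsOpen O → (K : Set G) ⊆ O →
      ∃ V : Set G, IsOpen V ∧ (1 : G) ∈ V ∧ (K : Set G) * V ⊆ O) (x : G) :
    𝓝 (q K H x) = Filter.comap (Prod.mk (q K H x)) (basis K H).filter := by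
  rw [nhds_q]
  apply Filter.ext
  intro U
  constructor
  · intro hU
    rw [Filter.mem_map] at hU
    obtain ⟨O, hOsub, hOo, hxO⟩ := mem_nhds_iff.mp hU
    set O' : Set G := {y | ∃ u ∈ O, ∃ k ∈ (K : Set G), ∃ h ∈ (H : Set G), y = k * u * h}
      with hO'def
    have hO'o : IsOpen O' := isOpen_sat (K := K) (H := H) hOo
    have hxO' : x ∈ O' := ⟨x, hxO, 1, K.one_mem, 1, H.one_mem, by group⟩
    have hO'sub : O' ⊆ q K H ⁻¹' U := by
      rintro y ⟨u, hu, k, hk, h, hh, rfl⟩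
      have : q K H u = q K H (k * u * h) := q_eq.mpr ⟨k, hk, h, hh, rfl⟩
      simpa [Set.mem_preimage, ← this] using hOsub hu
    have hO'satK : ∀ k ∈ (K : Set G), ∀ y ∈ O', k * y ∈ O' := by
      rintro k' hk' y ⟨u, hu, k, hk, h, hh, rfl⟩
      exact ⟨u, hu, k' * k, K.mul_mem hk' hk, h, hh, by group⟩
    have hO'satH : ∀ h ∈ (H : Set G), ∀ y ∈ O', y * h ∈ O' := by
      rintro h' hh' y ⟨u, hu, k, hk, h, hh, rfl⟩
      exact ⟨u, hu, k, hk, h * h', H.mul_mem hh hh', by group⟩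
    obtain ⟨V₀, hV₀o, hV₀1, hV₀⟩ := exists_V_of_saturated hK hO'o hO'satK hxO'
    obtain ⟨W, hWo, hW1, hWp⟩ := swapKV hK hV₀o hV₀1
    refine Filter.mem_comap.mpr ⟨E K H W,
      (basis K H).mem_filter_of_mem ⟨W, hWo, hW1, rfl⟩, ?_⟩
    rintro b hb
    obtain ⟨x', y', hx', hy', k, hk, w, hw, h, hh, he⟩ := mem_E.mp hb
    obtain ⟨k₁, hk₁, h₁, hh₁, he₁⟩ := q_eq.mp hx'.symm
    obtain ⟨k₂, hk₂, v₀, hv₀, hwk⟩ := hWp w hw k₁ hk₁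
    have hy'mem : y' ∈ O' := by
      have h1 : (k * k₂) * v₀ * x ∈ O' := hV₀ (k * k₂) (K.mul_mem hk hk₂) v₀ hv₀
      have h2 : (k * k₂) * v₀ * x * (h₁ * h) ∈ O' :=
        hO'satH (h₁ * h) (H.mul_mem hh₁ hh) _ h1
      have h3 : y' = (k * k₂) * v₀ * x * (h₁ * h) := by
        rw [he, he₁, show k * w * (k₁ * x * h₁) * h = k * (w * k₁) * x * (h₁ * h) from by group,
          hwk]
        group
      rwa [h3]
    have : q K H y' ∈ U := hO'sub hy'mem
    rwa [hy'] at this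
  · intro hU
    obtain ⟨S, hS, hsub⟩ := Filter.mem_comap.mp hU
    obtain ⟨r, ⟨V, hVo, hV1, rfl⟩, hrS⟩ := (basis K H).mem_filter_iff.mp hS
    rw [Filter.mem_map]
    have hsub' : ∀ v ∈ V, v * x ∈ q K H ⁻¹' U := by
      intro v hv
      apply hsub
      apply Set.mem_preimage.mpr
      apply hrS
      exact mem_E.mpr ⟨x, v * x, rfl, rfl, 1, K.one_mem, v, hv, 1, H.one_mem, by group⟩
    refine Filter.mem_of_superset ((hVo.mul_right (t := {x})).mem_nhds
      ⟨1, hV1, x, rfl, one_mul x⟩) ?_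
    rintro y ⟨v, hv, x0, hx0, hy⟩
    have hx0' : x0 = x := hx0
    have hy' : v * x0 = y := hy
    rw [← hy', hx0']
    exact hsub' v hv

theorem topo_eq
    (hK : ∀ O : Set G, IsOpen O → (K : Set G) ⊆ O →
      ∃ V : Set G, IsOpen V ∧ (1 : G) ∈ V ∧ (K : Set G) * V ⊆ O) :
    (inferInstance : TopologicalSpace (Q K H)) = (core (K := K) (H := H) hK).toTopologicalSpace := by
  apply TopologicalSpace.ext_nhds
  intro a
  obtain ⟨x, rfl⟩ := q_surj a
  rw [UniformSpace.Core.nhds_toTopologicalSpace]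
  exact nhds_eq_comap hK x

theorem hasBasis_filter (V' : ℕ → Set G)
    (hp : ∀ n, IsOpen (V' n) ∧ (1 : G) ∈ V' n)
    (hcof : ∀ V : Set G, IsOpen V → (1 : G) ∈ V →
      ∃ n, ∀ k ∈ (K : Set G), ∀ v ∈ V' n,
        ∃ k' ∈ (K : Set G), ∃ v' ∈ V, k * v = k' * v') :
    (basis K H).filter.HasBasis (fun _ : ℕ => True) (fun n => E K H (V' n)) := by
  constructor
  intro t
  simp only [true_and]
  constructor
  · intro ht
    obtain ⟨r, ⟨V, hVo, hV1, rfl⟩, hrt⟩ := (basis K H).mem_filter_iff.mp ht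
    obtain ⟨n, hn⟩ := hcof V hVo hV1
    exact ⟨n, (E_mono hn).trans hrt⟩
  · rintro ⟨n, hn⟩
    exact Filter.mem_of_superset
      ((basis K H).mem_filter_of_mem ⟨V' n, (hp n).1, (hp n).2, rfl⟩) hn

theorem t1
    (hK : ∀ O : Set G, IsOpen O → (K : Set G) ⊆ O →
      ∃ V : Set G, IsOpen V ∧ (1 : G) ∈ V ∧ (K : Set G) * V ⊆ O)
    (hH : IsClosed (H : Set G)) : T1Space (Q K H) := by
  constructor
  intro a
  obtain ⟨x, rfl⟩ := q_surj a
  rw [← (q_isQuotientMap (K := K) (H := H)).isClosed_preimage]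
  have hpre : q K H ⁻¹' {q K H x} =
      {g : G | ∃ k ∈ (K : Set G), ∃ c ∈ (fun h => x * h) '' (H : Set G), g = k * c} := by
    ext g
    simp only [Set.mem_preimage, Set.mem_singleton_iff, Set.mem_setOf_eq, Set.mem_image]
    constructor
    · intro hg
      obtain ⟨k, hk, h, hh, he⟩ := q_eq.mp hg.symm
      exact ⟨k, hk, x * h, ⟨h, hh, rfl⟩, by rw [he]; group⟩
    · rintro ⟨k, hk, c, ⟨h, hh, rfl⟩, he⟩
      exact (q_eq.mpr ⟨k, hk, h, hh, by rw [he]; group⟩).symm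
  rw [hpre]
  exact isClosed_K_mul hK ((Homeomorph.mulLeft x).isClosedMap _ hH)

end KH2

end KH

end Stmt8Aux

/-- if `H` is closed, `K` is strongly neutral and the right coset space
`K\G` is first-countable, then the double coset space `K\G/H` is metrizable. -/
theorem stmt_8 {G : Type*} [Group G] [TopologicalSpace G] [IsTopologicalGroup G] [T2Space G]
    (K H : Subgroup G)
    (hK : ∀ O : Set G, IsOpen O → (K : Set G) ⊆ O →
      ∃ V : Set G, IsOpen V ∧ (1 : G) ∈ V ∧ (K : Set G) * V ⊆ O)
    (hH : IsClosed (H : Set G))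
    (hfc : FirstCountableTopology (Quotient (QuotientGroup.rightRel K))) :
    TopologicalSpace.MetrizableSpace (DoubleCoset.Quotient (K : Set G) (H : Set G)) := by
  obtain ⟨V', hV'p, hV'cof⟩ := Stmt8Aux.countable_family hK hfc
  letI u : UniformSpace (Stmt8Aux.Q K H) :=
    UniformSpace.ofCoreEq (Stmt8Aux.core hK) _ (Stmt8Aux.topo_eq hK)
  haveI hcg : (uniformity (Stmt8Aux.Q K H)).IsCountablyGenerated := by
    have hb := Stmt8Aux.hasBasis_filter (K := K) (H := H) V' hV'p hV'cof
    have huni : uniformity (Stmt8Aux.Q K H) = (Stmt8Aux.basis K H).filter := rfl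
    rw [huni]
    exact hb.isCountablyGenerated
  haveI ht1 : T1Space (Stmt8Aux.Q K H) := Stmt8Aux.t1 hK hH
  exact @UniformSpace.metrizableSpace (Stmt8Aux.Q K H) u hcg inferInstance
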